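/- For two positive bounded linear operators A and B on a separable Hilbert space and any s with 0 ≤ s ≤ 1, the operator norm satisfies ‖A^s B^s‖ ≤ ‖AB‖^s. -/

import Mathlib

open scoped ENNReal NNReal

section aux
variable {H : Type*} [NormedAddCommGroup H] [InnerProductSpace ℂ H] [CompleteSpace H]

noncomputable def pw (A : H →L[ℂ] H) (s : ℝ) : H →L[ℂ] H := cfc (fun u : ℝ => u ^ s) A

example (A : H →L[ℂ] H) (s : ℝ) : IsSelfAdjoint (pw A s) := cfc_predicate _ _

example (A : H →L[ℂ] H) (hA : A.IsPositive) : ∀ x ∈ spectrum ℝ A, 0 ≤ x :=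
  SpectrumRestricts.nnreal_iff.mp hA.spectrumRestricts

lemma contOnPow {s : ℝ} (hs : 0 ≤ s) {K : Set ℝ} : ContinuousOn (fun u : ℝ => u ^ s) K :=
  fun u _ => (Real.continuousAt_rpow_const u s (Or.inr hs)).continuousWithinAt

lemma pw_mul (A : H →L[ℂ] H) (hA : A.IsPositive) {s t : ℝ} (hs : 0 ≤ s) (ht : 0 ≤ t) :
    pw A s * pw A t = pw A (s + t) := by
  have hsp := SpectrumRestricts.nnreal_iff.mp hA.spectrumRestricts
  calc pw A s * pw A t = cfc (fun u : ℝ => u ^ s * u ^ t) A :=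
        (cfc_mul _ _ A (contOnPow hs) (contOnPow ht)).symm
    _ = pw A (s + t) := cfc_congr fun u hu => (Real.rpow_add_of_nonneg (hsp u hu) hs ht).symm

lemma spectralRadius_mul_swap {𝔸 : Type*} [NormedRing 𝔸] [NormedAlgebra ℂ 𝔸] (a b : 𝔸) :
    spectralRadius ℂ (a * b) = spectralRadius ℂ (b * a) := by
  have key : ∀ x y : 𝔸, spectralRadius ℂ (x * y) ≤ spectralRadius ℂ (y * x) := by
    intro x y
    rw [spectralRadius, spectralRadius]
    refine iSup₂_le fun k hk => ?_
    rcases eq_or_ne k 0 with rfl | hk0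
    · simp
    · have hmem : k ∈ spectrum ℂ (y * x) \ {0} := by
        rw [← spectrum.nonzero_mul_comm (𝕜 := ℂ)]; exact ⟨hk, hk0⟩
      exact le_iSup₂ (f := fun k (_ : k ∈ spectrum ℂ (y * x)) => (‖k‖₊ : ℝ≥0∞)) k hmem.1
  exact le_antisymm (key a b) (key b a)

lemma norm_mul_swap {𝔸 : Type*} [NormedRing 𝔸] [StarRing 𝔸] [NormedStarGroup 𝔸] {x y : 𝔸}
    (hx : IsSelfAdjoint x) (hy : IsSelfAdjoint y) : ‖x * y‖ = ‖y * x‖ := by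
  conv_rhs => rw [← norm_star (y * x)]
  rw [star_mul, hx.star_eq, hy.star_eq]

end aux

section key
variable {H : Type*} [NormedAddCommGroup H] [InnerProductSpace ℂ H] [CompleteSpace H]
  [Nontrivial H]

lemma cordes_key (A B : H →L[ℂ] H) (hA : A.IsPositive) (hB : B.IsPositive)
    {s t : ℝ} (hs : 0 ≤ s) (ht : 0 ≤ t) :
    ‖pw A ((s + t) / 2) * pw B ((s + t) / 2)‖ ^ 2
      ≤ ‖pw A s * pw B s‖ * ‖pw A t * pw B t‖ := by
  set m : ℝ := (s + t) / 2 with hm_def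
  have hm : 0 ≤ m := by positivity
  have hPm : IsSelfAdjoint (pw A m) := cfc_predicate _ _
  have hQm : IsSelfAdjoint (pw B m) := cfc_predicate _ _
  have hPst : IsSelfAdjoint (pw A (s + t)) := cfc_predicate _ _
  have hAm : pw A m * pw A m = pw A (s + t) := by
    rw [pw_mul A hA hm hm]; congr 1; ring
  have hBm : pw B m * pw B m = pw B (s + t) := by
    rw [pw_mul B hB hm hm]; congr 1; ring
  have h1 : ‖pw A m * pw B m‖ ^ 2 = ‖pw B m * pw A (s + t) * pw B m‖ := by
    rw [sq, ← CStarRing.norm_star_mul_self, star_mul, hPm.star_eq, hQm.star_eq]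
    congr 1
    simp only [mul_assoc]
    rw [← mul_assoc (pw A m) (pw A m), hAm]
  have hY : IsSelfAdjoint (pw B m * pw A (s + t) * pw B m) := by
    simp only [IsSelfAdjoint, star_mul, hPst.star_eq, hQm.star_eq, mul_assoc]
  have h2 : (‖pw B m * pw A (s + t) * pw B m‖₊ : ℝ≥0∞)
      ≤ ((‖pw A t * pw B t‖₊ * ‖pw B s * pw A s‖₊ : ℝ≥0) : ℝ≥0∞) := by
    rw [← hY.spectralRadius_eq_nnnorm]
    calc spectralRadius ℂ (pw B m * pw A (s + t) * pw B m)
        = spectralRadius ℂ (pw A (s + t) * pw B m * pw B m) := by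
          rw [mul_assoc, mul_assoc]; exact spectralRadius_mul_swap _ _
      _ = spectralRadius ℂ (pw A (s + t) * pw B (s + t)) := by rw [mul_assoc, hBm]
      _ = spectralRadius ℂ (pw A s * (pw A t * (pw B t * pw B s))) := by
          have hB' : pw B (s + t) = pw B t * pw B s := by
            rw [pw_mul B hB ht hs, add_comm]
          rw [← pw_mul A hA hs ht, hB']
          simp only [mul_assoc]
      _ = spectralRadius ℂ ((pw A t * (pw B t * pw B s)) * pw A s) :=
          spectralRadius_mul_swap _ _
      _ = spectralRadius ℂ ((pw A t * pw B t) * (pw B s * pw A s)) := by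
          simp only [mul_assoc]
      _ ≤ ‖(pw A t * pw B t) * (pw B s * pw A s)‖₊ := spectrum.spectralRadius_le_nnnorm (𝕜 := ℂ) _
      _ ≤ ((‖pw A t * pw B t‖₊ * ‖pw B s * pw A s‖₊ : ℝ≥0) : ℝ≥0∞) := by
          exact_mod_cast ENNReal.coe_le_coe.mpr (nnnorm_mul_le _ _)
  have h3 : ‖pw B m * pw A (s + t) * pw B m‖ ≤ ‖pw A t * pw B t‖ * ‖pw B s * pw A s‖ := by
    have := ENNReal.coe_le_coe.mp h2
    exact_mod_cast this
  rw [h1]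
  calc ‖pw B m * pw A (s + t) * pw B m‖ ≤ ‖pw A t * pw B t‖ * ‖pw B s * pw A s‖ := h3
    _ = ‖pw A s * pw B s‖ * ‖pw A t * pw B t‖ := by
        rw [mul_comm]
        congr 1
        exact norm_mul_swap (cfc_predicate _ _) (cfc_predicate _ _)

end key

section dyadic
variable {H : Type*} [NormedAddCommGroup H] [InnerProductSpace ℂ H] [CompleteSpace H]
  [Nontrivial H]

lemma cordes_mid (A B : H →L[ℂ] H) (hA : A.IsPositive) (hB : B.IsPositive)
    {s t : ℝ} (hs : 0 ≤ s) (ht : 0 ≤ t)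
    (h1 : ‖pw A s * pw B s‖ ≤ ‖A * B‖ ^ s) (h2 : ‖pw A t * pw B t‖ ≤ ‖A * B‖ ^ t) :
    ‖pw A ((s + t) / 2) * pw B ((s + t) / 2)‖ ≤ ‖A * B‖ ^ ((s + t) / 2) := by
  set m : ℝ := (s + t) / 2
  have hm : 0 ≤ m := by positivity
  have key := cordes_key A B hA hB hs ht
  have hsq : ‖pw A m * pw B m‖ ^ 2 ≤ (‖A * B‖ ^ m) ^ 2 := by
    calc ‖pw A m * pw B m‖ ^ 2 ≤ ‖pw A s * pw B s‖ * ‖pw A t * pw B t‖ := key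
      _ ≤ ‖A * B‖ ^ s * ‖A * B‖ ^ t :=
          mul_le_mul h1 h2 (norm_nonneg _) (Real.rpow_nonneg (norm_nonneg _) _)
      _ = (‖A * B‖ ^ m) ^ 2 := by
          rw [sq, ← Real.rpow_add_of_nonneg (norm_nonneg _) hm hm]
          rw [← Real.rpow_add_of_nonneg (norm_nonneg _) hs ht]
          congr 1
          simp only [m]
          ring
  exact le_of_pow_le_pow_left₀ two_ne_zero (Real.rpow_nonneg (norm_nonneg _) _) hsq

lemma pw_zero (A : H →L[ℂ] H) (hA : A.IsPositive) : pw A 0 = 1 := by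
  have : pw A 0 = cfc (fun _ : ℝ => (1 : ℝ)) A := cfc_congr fun u _ => Real.rpow_zero u
  rw [this, cfc_const_one ℝ A hA.isSelfAdjoint]

lemma pw_one (A : H →L[ℂ] H) (hA : A.IsPositive) : pw A 1 = A := by
  have : pw A 1 = cfc (fun u : ℝ => u) A := cfc_congr fun u _ => Real.rpow_one u
  rw [this, cfc_id' ℝ A hA.isSelfAdjoint]

lemma cordes_dyadic (A B : H →L[ℂ] H) (hA : A.IsPositive) (hB : B.IsPositive) :
    ∀ n k : ℕ, k ≤ 2 ^ n →
      ‖pw A ((k : ℝ) / 2 ^ n) * pw B ((k : ℝ) / 2 ^ n)‖ ≤ ‖A * B‖ ^ ((k : ℝ) / 2 ^ n) := by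
  intro n
  induction n with
  | zero =>
    intro k hk
    interval_cases k
    · simp only [Nat.cast_zero, pow_zero, zero_div]
      rw [pw_zero A hA, pw_zero B hB, Real.rpow_zero, one_mul, norm_one]
    · simp only [Nat.cast_one, pow_zero, div_one]
      rw [pw_one A hA, pw_one B hB, Real.rpow_one]
  | succ n ih =>
    intro k hk
    have h2n : (2:ℝ) ^ (n+1) = 2 ^ n * 2 := by ring
    have h2n' : 2 ^ (n+1) = 2 * 2 ^ n := by rw [pow_succ]; ring
    rcases Nat.even_or_odd k with ⟨j, hj⟩ | ⟨j, hj⟩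
    · have hjk : ((k : ℝ)) / 2 ^ (n+1) = (j : ℝ) / 2 ^ n := by
        subst hj; push_cast; rw [h2n]; field_simp; ring
      rw [hjk]
      exact ih j (by omega)
    · have hjle : j + 1 ≤ 2 ^ n := by
        have : 2 ^ (n+1) = 2 * 2 ^ n := by rw [pow_succ]; ring
        omega
      have hmid : ((k : ℝ)) / 2 ^ (n+1) = ((j : ℝ) / 2 ^ n + ((j:ℝ)+1) / 2 ^ n) / 2 := by
        subst hj; push_cast; rw [h2n]; field_simp; ring
      rw [hmid]
      have h1 := ih j (by omega)
      have h2 := ih (j+1) hjle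
      push_cast at h2
      exact cordes_mid A B hA hB (by positivity) (by positivity) h1 h2

end dyadic

section limit
open Filter
variable {H : Type*} [NormedAddCommGroup H] [InnerProductSpace ℂ H] [CompleteSpace H]
  [Nontrivial H]

lemma pw_tendsto (A : H →L[ℂ] H) (hA : A.IsPositive) {s : ℝ} (hs : 0 < s)
    {d : ℕ → ℝ} (hd_ge : ∀ n, s ≤ d n) (hd_le : ∀ n, d n ≤ 2)
    (hlim : Tendsto d atTop (nhds s)) :
    Tendsto (fun n => pw A (d n)) atTop (nhds (pw A s)) := by
  have hspec : ∀ x ∈ spectrum ℝ A, 0 ≤ x :=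
    SpectrumRestricts.nnreal_iff.mp hA.spectrumRestricts
  have hbound : ∀ x ∈ spectrum ℝ A, x ≤ ‖A‖ := fun x hx =>
    (le_abs_self x).trans (spectrum.norm_le_norm_of_mem hx)
  rw [Metric.tendsto_atTop]
  intro ε hε
  set K : Set (ℝ × ℝ) := (Set.Icc 0 ‖A‖) ×ˢ (Set.Icc s 2) with hK_def
  have hK : IsCompact K := isCompact_Icc.prod isCompact_Icc
  have hF : ContinuousOn (fun p : ℝ × ℝ => p.1 ^ p.2) K := by
    intro p hp
    exact (Real.continuousAt_rpow p (Or.inr (lt_of_lt_of_le hs hp.2.1))).continuousWithinAt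
  have hUC := hK.uniformContinuousOn_of_continuous hF
  rw [Metric.uniformContinuousOn_iff] at hUC
  obtain ⟨δ, hδ, hδ'⟩ := hUC (ε/2) (by linarith)
  obtain ⟨N, hN⟩ := (Metric.tendsto_atTop.mp hlim) δ hδ
  refine ⟨N, fun n hn => ?_⟩
  have hsub : pw A (d n) - pw A s = cfc (fun u : ℝ => u ^ d n - u ^ s) A :=
    (cfc_sub _ _ A (contOnPow (hs.le.trans (hd_ge n))) (contOnPow hs.le)).symm
  have key : ‖pw A (d n) - pw A s‖ ≤ ε / 2 := by
    rw [hsub]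
    refine norm_cfc_le (by linarith) fun x hx => ?_
    have hx1 : (x, d n) ∈ K := ⟨⟨hspec x hx, hbound x hx⟩, ⟨hd_ge n, hd_le n⟩⟩
    have hx2 : (x, s) ∈ K := ⟨⟨hspec x hx, hbound x hx⟩, ⟨le_refl s, (hd_ge 0).trans (hd_le 0)⟩⟩
    have hdist : dist ((x, d n) : ℝ × ℝ) (x, s) < δ := by
      rw [Prod.dist_eq]
      simp only [dist_self]
      rw [max_eq_right dist_nonneg]
      exact hN n hn
    have := hδ' _ hx1 _ hx2 hdist
    rw [Real.dist_eq] at this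
    exact this.le
  calc dist (pw A (d n)) (pw A s) = ‖pw A (d n) - pw A s‖ := dist_eq_norm _ _
    _ ≤ ε / 2 := key
    _ < ε := by linarith

end limit

section final
open Filter
variable {H : Type*} [NormedAddCommGroup H] [InnerProductSpace ℂ H] [CompleteSpace H]
  [Nontrivial H]

lemma cordes_pos (A B : H →L[ℂ] H) (hA : A.IsPositive) (hB : B.IsPositive)
    {s : ℝ} (hs : 0 < s) (hs1 : s ≤ 1) :
    ‖pw A s * pw B s‖ ≤ ‖A * B‖ ^ s := by
  set d : ℕ → ℝ := fun n => (⌈s * 2 ^ n⌉₊ : ℝ) / 2 ^ n with hd_def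
  have h2pos : ∀ n : ℕ, (0:ℝ) < 2 ^ n := fun n => by positivity
  have hd_ge : ∀ n, s ≤ d n := fun n => by
    rw [hd_def]
    rw [le_div_iff₀ (h2pos n)]
    exact Nat.le_ceil _
  have hd_le : ∀ n, d n ≤ s + (1/2) ^ n := fun n => by
    rw [hd_def, div_le_iff₀ (h2pos n)]
    have h1 : ((1:ℝ)/2) ^ n * 2 ^ n = 1 := by rw [← mul_pow]; norm_num
    calc (⌈s * 2 ^ n⌉₊ : ℝ) ≤ s * 2 ^ n + 1 := (Nat.ceil_lt_add_one (by positivity)).le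
      _ = (s + (1/2) ^ n) * 2 ^ n := by rw [add_mul, h1]
  have hpow0 : Tendsto (fun n : ℕ => ((1:ℝ)/2) ^ n) atTop (nhds 0) :=
    tendsto_pow_atTop_nhds_zero_of_lt_one (by norm_num) (by norm_num)
  have hlim : Tendsto d atTop (nhds s) := by
    refine tendsto_of_tendsto_of_tendsto_of_le_of_le tendsto_const_nhds ?_ hd_ge hd_le
    simpa using tendsto_const_nhds.add hpow0
  have hd2 : ∀ n, d n ≤ 2 := fun n =>
    (hd_le n).trans (by
      have : ((1:ℝ)/2) ^ n ≤ 1 := pow_le_one₀ (by norm_num) (by norm_num)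
      linarith)
  have hdyadic : ∀ n, ‖pw A (d n) * pw B (d n)‖ ≤ ‖A * B‖ ^ (d n) := by
    intro n
    have hk : ⌈s * 2 ^ n⌉₊ ≤ 2 ^ n := by
      rw [Nat.ceil_le]
      push_cast
      calc s * 2 ^ n ≤ 1 * 2 ^ n := by
            exact mul_le_mul_of_nonneg_right hs1 (h2pos n).le
        _ = 2 ^ n := one_mul _
    have := cordes_dyadic A B hA hB n ⌈s * 2 ^ n⌉₊ hk
    convert this using 3 <;> · rw [hd_def]; push_cast; ring
  have hLHS : Tendsto (fun n => ‖pw A (d n) * pw B (d n)‖) atTop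
      (nhds ‖pw A s * pw B s‖) :=
    ((pw_tendsto A hA hs hd_ge hd2 hlim).mul (pw_tendsto B hB hs hd_ge hd2 hlim)).norm
  have hRHS : Tendsto (fun n => ‖A * B‖ ^ (d n)) atTop (nhds (‖A * B‖ ^ s)) := by
    have hc : ContinuousAt (fun x : ℝ => ‖A * B‖ ^ x) s := by
      have h := Real.continuousAt_rpow (‖A * B‖, s) (Or.inr hs)
      exact h.comp (continuousAt_const.prodMk continuousAt_id)
    exact hc.tendsto.comp hlim
  exact le_of_tendsto_of_tendsto' hLHS hRHS hdyadic

end final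

/-- **Cordes inequality.** For two positive bounded linear operators `A` and `B` on a
separable Hilbert space and any `s` with `0 ≤ s ≤ 1`, the operator norm satisfies
`‖A^s B^s‖ ≤ ‖A B‖^s`, where powers are taken via the continuous functional calculus. -/
theorem cordes_inequality {H : Type*} [NormedAddCommGroup H] [InnerProductSpace ℂ H]
    [CompleteSpace H] [TopologicalSpace.SeparableSpace H]
    (A B : H →L[ℂ] H) (hA : A.IsPositive) (hB : B.IsPositive)
    (s : ℝ) (hs0 : 0 ≤ s) (hs1 : s ≤ 1) :
    ‖cfc (fun u : ℝ => u ^ s) A * cfc (fun u : ℝ => u ^ s) B‖ ≤ ‖A * B‖ ^ s := by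
  rcases subsingleton_or_nontrivial H with hH | hH
  · haveI : Subsingleton (H →L[ℂ] H) :=
      ⟨fun f g => ContinuousLinearMap.ext fun x => Subsingleton.elim _ _⟩
    rw [Subsingleton.elim (cfc (fun u : ℝ => u ^ s) A * cfc (fun u : ℝ => u ^ s) B) 0, norm_zero]
    exact Real.rpow_nonneg (norm_nonneg _) s
  · rcases hs0.eq_or_lt with rfl | hs
    · show ‖pw A 0 * pw B 0‖ ≤ _
      rw [pw_zero A hA, pw_zero B hB, one_mul, norm_one, Real.rpow_zero]
    · exact cordes_pos A B hA hB hs hs1
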